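/- Let X, Y, Ŷ be random vectors in ℝᵈ with E‖X - Y‖² ≤ σ² and E‖X - Ŷ‖² ≤ κσ². Let ξ be a Bernoulli random variable independent of (X, Y, Ŷ) with P(ξ = 1) = (K-1)/K, and let θ ∈ [0,1]. Define Z = (1-θ)Y + ξθY + (1-ξ)θŶ. Then E‖X - Z‖² ≤ (1 - θ/K + θκ/K)σ², provided κ ≥ 1 or more generally under the stated bounds. -/

import Mathlib

open MeasureTheory ProbabilityTheory

theorem atlas_variance_bound
    {Ω : Type*} [MeasurableSpace Ω] (μ : Measure Ω) [IsProbabilityMeasure μ]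
    {d : ℕ} (X Y Yhat : Ω → EuclideanSpace ℝ (Fin d)) (ξ : Ω → ℝ)
    (σ κ θ K : ℝ) (hσ : 0 ≤ σ) (hκ : 1 ≤ κ) (hθ0 : 0 ≤ θ) (hθ1 : θ ≤ 1) (hK : 1 ≤ K)
    (hXm : Measurable X) (hYm : Measurable Y) (hYhm : Measurable Yhat)
    (hξm : Measurable ξ)
    (hξ01 : ∀ ω, ξ ω = 0 ∨ ξ ω = 1)
    (hξp : μ {ω | ξ ω = 1} = ENNReal.ofReal ((K - 1) / K))
    (hindep : IndepFun ξ (fun ω => (X ω, Y ω, Yhat ω)) μ)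
    (hXY : Integrable (fun ω => ‖X ω - Y ω‖ ^ 2) μ)
    (hXYh : Integrable (fun ω => ‖X ω - Yhat ω‖ ^ 2) μ)
    (hZint : Integrable (fun ω =>
      ‖X ω - ((1 - θ) • Y ω + (ξ ω * θ) • Y ω + ((1 - ξ ω) * θ) • Yhat ω)‖ ^ 2) μ)
    (hbY : ∫ ω, ‖X ω - Y ω‖ ^ 2 ∂μ ≤ σ ^ 2)
    (hbYh : ∫ ω, ‖X ω - Yhat ω‖ ^ 2 ∂μ ≤ κ * σ ^ 2) :
    ∫ ω, ‖X ω - ((1 - θ) • Y ω + (ξ ω * θ) • Y ω + ((1 - ξ ω) * θ) • Yhat ω)‖ ^ 2 ∂μ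
      ≤ (1 - θ / K + θ * κ / K) * σ ^ 2 := by
  have hK0 : (0:ℝ) < K := lt_of_lt_of_le one_pos hK
  set A : Ω → ℝ := fun ω => ‖X ω - Y ω‖ ^ 2 with hAdef
  set B : Ω → ℝ := fun ω => ‖X ω - Yhat ω‖ ^ 2 with hBdef
  -- independence of (1 - ξ) with A and B
  have hφm : Measurable (fun x : ℝ => 1 - x) := measurable_const.sub measurable_id
  have hAm : Measurable (fun p : EuclideanSpace ℝ (Fin d) ×
      (EuclideanSpace ℝ (Fin d) × EuclideanSpace ℝ (Fin d)) => ‖p.1 - p.2.1‖ ^ 2) :=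
    (measurable_fst.sub measurable_snd.fst).norm.pow_const 2
  have hBm : Measurable (fun p : EuclideanSpace ℝ (Fin d) ×
      (EuclideanSpace ℝ (Fin d) × EuclideanSpace ℝ (Fin d)) => ‖p.1 - p.2.2‖ ^ 2) :=
    (measurable_fst.sub measurable_snd.snd).norm.pow_const 2
  have hiA : IndepFun (fun ω => 1 - ξ ω) A μ := hindep.comp hφm hAm
  have hiB : IndepFun (fun ω => 1 - ξ ω) B μ := hindep.comp hφm hBm
  -- integral of (1 - ξ) is 1/K
  have hsm : MeasurableSet {ω | ξ ω = 1} := hξm (measurableSet_singleton 1)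
  have hξeq : ξ = Set.indicator {ω | ξ ω = 1} (fun _ => (1:ℝ)) := by
    funext ω
    rcases hξ01 ω with h | h <;> simp [Set.indicator_apply, h]
  have hintξ : ∫ ω, ξ ω ∂μ = (K - 1) / K := by
    have h1 : (0:ℝ) ≤ (K - 1) / K := div_nonneg (by linarith) hK0.le
    calc ∫ ω, ξ ω ∂μ = ∫ ω, Set.indicator {ω | ξ ω = 1} (fun _ => (1:ℝ)) ω ∂μ := by
          rw [← hξeq]
      _ = (μ {ω | ξ ω = 1}).toReal • (1:ℝ) := by
          rw [integral_indicator_const _ hsm]; rfl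
      _ = (K - 1) / K := by rw [hξp, ENNReal.toReal_ofReal h1]; simp
  have hξint : Integrable ξ μ := by
    rw [hξeq]
    exact (integrable_const (1:ℝ)).indicator hsm
  have hint1ξ : ∫ ω, (1 - ξ ω) ∂μ = 1 / K := by
    rw [integral_sub (integrable_const 1) hξint, hintξ, integral_const]
    simp
    field_simp
    ring
  -- integrability of products
  have hbdd : ∀ ω, ‖1 - ξ ω‖ ≤ 1 := by
    intro ω; rcases hξ01 ω with h | h <;> simp [h]
  have hξsm : AEStronglyMeasurable (fun ω => 1 - ξ ω) μ :=
    (measurable_const.sub hξm).aestronglyMeasurable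
  have hpA : Integrable (fun ω => (1 - ξ ω) * A ω) μ :=
    hXY.bdd_mul hξsm (Filter.Eventually.of_forall hbdd)
  have hpB : Integrable (fun ω => (1 - ξ ω) * B ω) μ :=
    hXYh.bdd_mul hξsm (Filter.Eventually.of_forall hbdd)
  -- product formulas
  have hmulA : ∫ ω, (1 - ξ ω) * A ω ∂μ = (1 / K) * ∫ ω, A ω ∂μ := by
    have := hiA.integral_mul_eq_mul_integral hξsm hXY.1
    simp only [Pi.mul_apply] at this
    rw [this, hint1ξ]
  have hmulB : ∫ ω, (1 - ξ ω) * B ω ∂μ = (1 / K) * ∫ ω, B ω ∂μ := by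
    have := hiB.integral_mul_eq_mul_integral hξsm hXYh.1
    simp only [Pi.mul_apply] at this
    rw [this, hint1ξ]
  -- pointwise bound
  have hpt : ∀ ω, ‖X ω - ((1 - θ) • Y ω + (ξ ω * θ) • Y ω + ((1 - ξ ω) * θ) • Yhat ω)‖ ^ 2
      ≤ A ω - θ * ((1 - ξ ω) * A ω) + θ * ((1 - ξ ω) * B ω) := by
    intro ω
    rcases hξ01 ω with h | h
    · have hZ : X ω - ((1 - θ) • Y ω + (ξ ω * θ) • Y ω + ((1 - ξ ω) * θ) • Yhat ω)
          = (1 - θ) • (X ω - Y ω) + θ • (X ω - Yhat ω) := by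
        rw [h]; module
      rw [hZ, h]
      have hn : ‖(1 - θ) • (X ω - Y ω) + θ • (X ω - Yhat ω)‖
          ≤ (1 - θ) * ‖X ω - Y ω‖ + θ * ‖X ω - Yhat ω‖ := by
        calc ‖(1 - θ) • (X ω - Y ω) + θ • (X ω - Yhat ω)‖
            ≤ ‖(1 - θ) • (X ω - Y ω)‖ + ‖θ • (X ω - Yhat ω)‖ :=
            norm_add_le _ _
          _ = (1 - θ) * ‖X ω - Y ω‖ + θ * ‖X ω - Yhat ω‖ := by
              rw [norm_smul, norm_smul, Real.norm_eq_abs, Real.norm_eq_abs,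
                abs_of_nonneg (by linarith : (0:ℝ) ≤ 1 - θ), abs_of_nonneg hθ0]
      have h0 : (0:ℝ) ≤ ‖(1 - θ) • (X ω - Y ω) + θ • (X ω - Yhat ω)‖ := norm_nonneg _
      have ha : (0:ℝ) ≤ ‖X ω - Y ω‖ := norm_nonneg _
      have hb : (0:ℝ) ≤ ‖X ω - Yhat ω‖ := norm_nonneg _
      simp only [hAdef, hBdef]
      nlinarith [sq_nonneg (‖X ω - Y ω‖ - ‖X ω - Yhat ω‖), hn, h0,
        mul_nonneg (mul_nonneg hθ0 (by linarith : (0:ℝ) ≤ 1 - θ))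
          (sq_nonneg (‖X ω - Y ω‖ - ‖X ω - Yhat ω‖))]
    · have hZ : X ω - ((1 - θ) • Y ω + (ξ ω * θ) • Y ω + ((1 - ξ ω) * θ) • Yhat ω)
          = X ω - Y ω := by
        rw [h]; module
      rw [hZ, h]
      simp [hAdef]
  -- integrate
  have hRint : Integrable (fun ω => A ω - θ * ((1 - ξ ω) * A ω) + θ * ((1 - ξ ω) * B ω)) μ :=
    (hXY.sub (hpA.const_mul θ)).add (hpB.const_mul θ)
  have hIle : ∫ ω, ‖X ω - ((1 - θ) • Y ω + (ξ ω * θ) • Y ω + ((1 - ξ ω) * θ) • Yhat ω)‖ ^ 2 ∂μ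
      ≤ ∫ ω, (A ω - θ * ((1 - ξ ω) * A ω) + θ * ((1 - ξ ω) * B ω)) ∂μ :=
    integral_mono hZint hRint hpt
  have hIR : ∫ ω, (A ω - θ * ((1 - ξ ω) * A ω) + θ * ((1 - ξ ω) * B ω)) ∂μ
      = ∫ ω, A ω ∂μ - θ * ((1 / K) * ∫ ω, A ω ∂μ) + θ * ((1 / K) * ∫ ω, B ω ∂μ) := by
    have e1 : ∫ ω, (A ω - θ * ((1 - ξ ω) * A ω) + θ * ((1 - ξ ω) * B ω)) ∂μ
        = (∫ ω, (A ω - θ * ((1 - ξ ω) * A ω)) ∂μ) + ∫ ω, θ * ((1 - ξ ω) * B ω) ∂μ :=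
      integral_add (hXY.sub (hpA.const_mul θ)) (hpB.const_mul θ)
    have e2 : ∫ ω, (A ω - θ * ((1 - ξ ω) * A ω)) ∂μ
        = (∫ ω, A ω ∂μ) - ∫ ω, θ * ((1 - ξ ω) * A ω) ∂μ :=
      integral_sub hXY (hpA.const_mul θ)
    have e3 : ∫ ω, θ * ((1 - ξ ω) * A ω) ∂μ = θ * ∫ ω, (1 - ξ ω) * A ω ∂μ :=
      integral_const_mul θ _
    have e4 : ∫ ω, θ * ((1 - ξ ω) * B ω) ∂μ = θ * ∫ ω, (1 - ξ ω) * B ω ∂μ :=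
      integral_const_mul θ _
    rw [e1, e2, e3, e4, hmulA, hmulB]
  have hAnn : 0 ≤ ∫ ω, A ω ∂μ := integral_nonneg fun ω => sq_nonneg _
  have hcoef : θ / K ≤ 1 := by
    rw [div_le_one hK0]; linarith
  calc ∫ ω, ‖X ω - ((1 - θ) • Y ω + (ξ ω * θ) • Y ω + ((1 - ξ ω) * θ) • Yhat ω)‖ ^ 2 ∂μ
      ≤ ∫ ω, A ω ∂μ - θ * ((1 / K) * ∫ ω, A ω ∂μ) + θ * ((1 / K) * ∫ ω, B ω ∂μ) := by
        rw [← hIR]; exact hIle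
    _ = (1 - θ / K) * ∫ ω, A ω ∂μ + (θ / K) * ∫ ω, B ω ∂μ := by ring
    _ ≤ (1 - θ / K) * σ ^ 2 + (θ / K) * (κ * σ ^ 2) := by
        have h1 : 0 ≤ 1 - θ / K := by linarith
        have h2 : 0 ≤ θ / K := div_nonneg hθ0 hK0.le
        exact add_le_add (mul_le_mul_of_nonneg_left hbY h1)
          (mul_le_mul_of_nonneg_left hbYh h2)
    _ = (1 - θ / K + θ * κ / K) * σ ^ 2 := by ring
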